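/- Let F be a field with char(F) ≠ 2 in which every element admits a square root. Then every three-dimensional anti-commutative algebra over F has a two-dimensional subalgebra (a two-dimensional linear subspace closed under the multiplication). -/

import Mathlib

/-- coordinate cross product on `Fin 3 → F` -/
def crP {F : Type*} [Field F] (u v : Fin 3 → F) : Fin 3 → F :=
  ![u 1 * v 2 - u 2 * v 1, u 2 * v 0 - u 0 * v 2, u 0 * v 1 - u 1 * v 0]

/-- coordinate dot product on `Fin 3 → F` -/
def dtP {F : Type*} [Field F] (u v : Fin 3 → F) : F :=
  u 0 * v 0 + u 1 * v 1 + u 2 * v 2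

lemma crP_triple {F : Type*} [Field F] (w u v : Fin 3 → F)
    (hu : dtP w u = 0) (hv : dtP w v = 0) : crP w (crP u v) = 0 := by
  simp only [dtP] at hu hv
  funext i
  fin_cases i <;> simp [crP] <;>
    (first
      | linear_combination u 0 * hv - v 0 * hu
      | linear_combination u 1 * hv - v 1 * hu
      | linear_combination u 2 * hv - v 2 * hu)

lemma crP_parallel {F : Type*} [Field F] (w z : Fin 3 → F) (j : Fin 3)
    (hj : w j ≠ 0) (h : crP w z = 0) : z = (z j / w j) • w := by
  have h0 := congrFun h 0
  have h1 := congrFun h 1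
  have h2 := congrFun h 2
  simp [crP] at h0 h1 h2
  funext i
  simp only [Pi.smul_apply, smul_eq_mul]
  rw [div_mul_eq_mul_div, eq_div_iff hj]
  fin_cases i <;> fin_cases j <;>
    simp only [Fin.mk_zero, Fin.mk_one, show (⟨2, by omega⟩ : Fin 3) = 2 from rfl] <;>
    (first
      | ring1
      | linear_combination h0
      | linear_combination h1
      | linear_combination h2
      | linear_combination -h0
      | linear_combination -h1
      | linear_combination -h2)

theorem three_dim_anticommutative_has_two_dim_subalgebra
    (F : Type*) [Field F] (hchar : ringChar F ≠ 2)
    (hsq : ∀ a : F, ∃ b : F, b * b = a)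
    (V : Type*) [AddCommGroup V] [Module F V]
    (hdim : Module.finrank F V = 3)
    (mul : V →ₗ[F] V →ₗ[F] V)
    (hanti : ∀ x : V, mul x x = 0) :
    ∃ W : Submodule F V, Module.finrank F ↥W = 2 ∧
      ∀ x ∈ W, ∀ y ∈ W, mul x y ∈ W := by
  have h2 : (2 : F) ≠ 0 := Ring.two_ne_zero hchar
  have hfd : FiniteDimensional F V :=
    FiniteDimensional.of_finrank_pos (by rw [hdim]; norm_num)
  let b : Module.Basis (Fin 3) F V := Module.finBasisOfFinrankEq F V hdim
  -- antisymmetry of the multiplication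
  have hanti2 : ∀ x y : V, mul y x = -mul x y := by
    intro x y
    have h := hanti (x + y)
    simp only [map_add, LinearMap.add_apply, hanti, zero_add, add_zero] at h
    exact eq_neg_of_add_eq_zero_left h
  -- coordinates
  set cc : V → Fin 3 → F := fun v i => b.repr v i with hcc
  -- the three basic products
  set P0 : V := mul (b 1) (b 2) with hP0
  set P1 : V := mul (b 2) (b 0) with hP1
  set P2 : V := mul (b 0) (b 1) with hP2
  -- key expansion of the product in coordinates
  have hkey : ∀ x y : V, mul x y =
      crP (cc x) (cc y) 0 • P0 + crP (cc x) (cc y) 1 • P1 + crP (cc x) (cc y) 2 • P2 := by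
    intro x y
    have hx' := b.sum_repr x
    have hy' := b.sum_repr y
    rw [Fin.sum_univ_three] at hx' hy'
    conv_lhs => rw [← hx', ← hy']
    simp only [map_add, map_smul, LinearMap.add_apply, LinearMap.smul_apply, hanti,
      hanti2 (b 0) (b 1), hanti2 (b 1) (b 2), hanti2 (b 2) (b 0),
      ← hP0, ← hP1, ← hP2, crP, hcc]
    simp only [Matrix.cons_val_zero, Matrix.cons_val_one, Matrix.head_cons,
      Matrix.cons_val_two, Matrix.tail_cons, smul_zero, add_zero, zero_add]
    module
  -- existence of an isotropic vector for the quadratic form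
  obtain ⟨w, j, hwj, hQ⟩ :
      ∃ (w : Fin 3 → F) (j : Fin 3), w j ≠ 0 ∧
        w 0 * dtP w (cc P0) + w 1 * dtP w (cc P1) + w 2 * dtP w (cc P2) = 0 := by
    rcases eq_or_ne (cc P0 0) 0 with h0 | h0
    · refine ⟨![1, 0, 0], 0, by norm_num, ?_⟩
      simp [dtP, h0]
    · obtain ⟨r, hr⟩ := hsq ((cc P1 0 + cc P0 1) ^ 2 - 4 * (cc P0 0 * cc P1 1))
      refine ⟨![(r - (cc P1 0 + cc P0 1)) / (2 * cc P0 0), 1, 0], 1, by norm_num, ?_⟩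
      simp only [dtP, Matrix.cons_val_zero, Matrix.cons_val_one, Matrix.head_cons,
        Matrix.cons_val_two, Matrix.tail_cons]
      field_simp
      linear_combination hr
  -- the linear functional with kernel our subalgebra
  set f : V →ₗ[F] F := w 0 • b.coord 0 + w 1 • b.coord 1 + w 2 • b.coord 2 with hf
  have hfv : ∀ v : V, f v = dtP w (cc v) := by
    intro v
    simp [hf, dtP, hcc, Module.Basis.coord_apply]
  refine ⟨LinearMap.ker f, ?_, ?_⟩
  · -- dimension count
    have hfb : ∀ k : Fin 3, f (b k) = w k := by
      intro k
      simp only [hf, LinearMap.add_apply, LinearMap.smul_apply, Module.Basis.coord_apply,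
        Module.Basis.repr_self, smul_eq_mul]
      fin_cases k <;> simp
    have hrange : LinearMap.range f = ⊤ := by
      rw [LinearMap.range_eq_top]
      intro c
      refine ⟨(c / w j) • b j, ?_⟩
      rw [map_smul, hfb j, smul_eq_mul, div_mul_cancel₀ _ hwj]
    have hrk := LinearMap.finrank_range_add_finrank_ker f
    rw [hrange, finrank_top, Module.finrank_self, hdim] at hrk
    omega
  · -- closure under multiplication
    intro x hx y hy
    rw [LinearMap.mem_ker] at hx hy ⊢
    have hx' : dtP w (cc x) = 0 := by rw [← hfv]; exact hx
    have hy' : dtP w (cc y) = 0 := by rw [← hfv]; exact hy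
    have htrip := crP_triple w (cc x) (cc y) hx' hy'
    have hpar := crP_parallel w (crP (cc x) (cc y)) j hwj htrip
    set l : F := crP (cc x) (cc y) j / w j with hl
    rw [hkey x y, hpar]
    simp only [Pi.smul_apply, smul_eq_mul, map_add, map_smul, smul_eq_mul]
    rw [hfv P0, hfv P1, hfv P2]
    linear_combination l * hQ
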